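/- arXiv:0803.3730 — 7 statements merged into one kernel-verified Lean document; each statement's English description precedes it below -/
import Mathlib

section
/- Let R be a discrete valuation ring with uniformizer π, let B be a commutative R-algebra, and let J ⊆ I be ideals of B such that J + πB = I + πB, the quotient B/I is flat as an R-module, and I/J is finitely generated as an R-module. Then I = J. -/
/-- Let `R` be a discrete valuation ring with uniformizer `π`, let `B` be a commutative
`R`-algebra, and let `J ⊆ I` be ideals of `B` such that `J + πB = I + πB`, the quotient
`B/I` is flat as an `R`-module, and `I/J` is finitely generated as an `R`-module.
Then `I = J`. -/
theorem stmt0 (R : Type*) [CommRing R] [IsDomain R] [IsDiscreteValuationRing R]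
    (π : R) (hπ : Irreducible π)
    (B : Type*) [CommRing B] [Algebra R B]
    (I J : Ideal B) (hJI : J ≤ I)
    (hmod : J + Ideal.span {algebraMap R B π} = I + Ideal.span {algebraMap R B π})
    (hflat : Module.Flat R (B ⧸ I))
    (hfg : Module.Finite R
      ((I.restrictScalars R) ⧸
        ((J.restrictScalars R).comap (I.restrictScalars R).subtype))) :
    I = J := by
  set p : B := algebraMap R B π with hp
  set N := (J.restrictScalars R).comap (I.restrictScalars R).subtype with hN
  -- π is regular on B ⧸ I since B ⧸ I is flat over the domain R
  have hreg : IsSMulRegular (B ⧸ I) π := by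
    have h0 : IsSMulRegular R π := fun a b h =>
      mul_left_cancel₀ hπ.ne_zero (by simpa [smul_eq_mul] using h)
    exact ((TensorProduct.rid R (B ⧸ I)).isSMulRegular_congr π).mp (h0.lTensor (B ⧸ I))
  -- key decomposition: every x ∈ I is j + π b with j ∈ J, b ∈ I
  have key : ∀ x ∈ I, ∃ j ∈ J, ∃ b ∈ I, x = j + p * b := by
    intro x hx
    have hx' : x ∈ J + Ideal.span {p} := by
      rw [hmod]
      exact Submodule.mem_sup_left hx
    obtain ⟨j, hj, s, hs, hjs⟩ := Submodule.mem_sup.mp hx'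
    obtain ⟨b, hb⟩ := Ideal.mem_span_singleton'.mp hs
    have hpb : p * b ∈ I := by
      have : p * b = x - j := by rw [mul_comm, hb, ← hjs]; ring
      rw [this]
      exact I.sub_mem hx (hJI hj)
    -- show b ∈ I using regularity of π on B ⧸ I
    have hbI : b ∈ I := by
      have h1 : π • (Ideal.Quotient.mk I b) = 0 := by
        have e1 : π • (Ideal.Quotient.mk I b) = Ideal.Quotient.mk I (π • b) := by
          rw [← Ideal.Quotient.mkₐ_eq_mk R I, map_smul]
        rw [e1, Algebra.smul_def, ← hp, Ideal.Quotient.eq_zero_iff_mem.mpr hpb]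
      have := hreg (show π • Ideal.Quotient.mk I b = π • 0 by simpa using h1)
      exact Ideal.Quotient.eq_zero_iff_mem.mp this
    refine ⟨j, hj, b, hbI, ?_⟩
    rw [← hjs, mul_comm p b, hb]
  -- Nakayama: the R-module M = I/N satisfies M = π M, π in Jacobson radical
  have hle : (⊤ : Submodule R ((I.restrictScalars R) ⧸ N)) ≤
      (Ideal.span {π}) • (⊤ : Submodule R ((I.restrictScalars R) ⧸ N)) := by
    intro m _
    obtain ⟨⟨x, hx⟩, rfl⟩ := Submodule.Quotient.mk_surjective N m
    obtain ⟨j, hj, b, hb, hxe⟩ := key x hx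
    have hpb : p * b ∈ I := by
      have : p * b = x - j := by rw [hxe]; ring
      rw [this]; exact I.sub_mem hx (hJI hj)
    have heq : (Submodule.Quotient.mk (⟨x, hx⟩ : I.restrictScalars R) :
        (I.restrictScalars R) ⧸ N) = Submodule.Quotient.mk ⟨p * b, hpb⟩ := by
      rw [Submodule.Quotient.eq]
      exact show x - p * b ∈ J by
        have : x - p * b = j := by rw [hxe]; ring
        rw [this]; exact hj
    rw [heq]
    have hsmul : (Submodule.Quotient.mk (⟨p * b, hpb⟩ : I.restrictScalars R) :
        (I.restrictScalars R) ⧸ N) = π • Submodule.Quotient.mk ⟨b, hb⟩ := by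
      rw [← Submodule.Quotient.mk_smul]
      congr 1
      ext
      show p * b = π • b
      rw [← algebraMap_smul B π b, smul_eq_mul]
    rw [hsmul]
    exact Submodule.smul_mem_smul (Ideal.mem_span_singleton_self π) trivial
  have hjac : Ideal.span {π} ≤ Ideal.jacobson (⊥ : Ideal R) := by
    rw [IsLocalRing.jacobson_eq_maximalIdeal (⊥ : Ideal R) bot_ne_top]
    rw [Ideal.span_le]
    intro r hr
    rw [Set.mem_singleton_iff] at hr
    rw [hr]
    exact (IsLocalRing.mem_maximalIdeal π).mpr hπ.not_isUnit
  have htop : (⊤ : Submodule R ((I.restrictScalars R) ⧸ N)) = ⊥ :=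
    Submodule.eq_bot_of_le_smul_of_le_jacobson_bot (Ideal.span {π}) ⊤
      (Module.Finite.fg_top (R := R)) hle hjac
  have hNtop : N = ⊤ := by
    rw [← Submodule.Quotient.subsingleton_iff]
    constructor
    intro a b
    have ha : a ∈ (⊥ : Submodule R _) := htop ▸ Submodule.mem_top
    have hb : b ∈ (⊥ : Submodule R _) := htop ▸ Submodule.mem_top
    rw [Submodule.mem_bot] at ha hb
    rw [ha, hb]
  refine le_antisymm (fun x hx => ?_) hJI
  have : (⟨x, hx⟩ : I.restrictScalars R) ∈ N := hNtop ▸ Submodule.mem_top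
  exact this
end

section
/- Let R be a discrete valuation ring with uniformizer π and let M be a semireflexive R-module. Then M is a flat R-module, M is separated for the π-adic topology (i.e. the intersection of the submodules πⁿM over all n ≥ 0 is zero), and if moreover M ≠ 0 then M is a faithfully flat R-module. -/
/-- An `R`-module `M` is semireflexive if the canonical evaluation map from `M` to its
double dual is injective. -/
def Semireflexive (R : Type*) (M : Type*) [CommRing R] [AddCommGroup M] [Module R M] : Prop :=
  Function.Injective (Module.Dual.eval R M)

open TensorProduct in
/-- Let `R` be a discrete valuation ring with uniformizer `π` and let `M` be a semireflexive
`R`-module.  Then `M` is a flat `R`-module, `M` is separated for the `π`-adic topology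
(i.e. `⋂ₙ πⁿM = 0`), and if moreover `M ≠ 0` then `M` is a faithfully flat `R`-module. -/
theorem stmt1 (R : Type*) [CommRing R] [IsDomain R] [IsDiscreteValuationRing R]
    (π : R) (hπ : Irreducible π)
    (M : Type*) [AddCommGroup M] [Module R M]
    (hM : Semireflexive R M) :
    Module.Flat R M ∧
      (⨅ n : ℕ, (Ideal.span {π} ^ n) • (⊤ : Submodule R M)) = ⊥ ∧
      (Nontrivial M → Module.FaithfullyFlat R M) := by
  classical
  -- M is torsion-free
  have hTF : ∀ (a : R) (x : M), a ≠ 0 → a • x = 0 → x = 0 := by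
    intro a x ha hax
    apply hM
    ext f
    simp only [Module.Dual.eval_apply, map_zero, LinearMap.zero_apply]
    have h1 : a * f x = 0 := by rw [← smul_eq_mul, ← map_smul, hax, map_zero]
    exact (mul_eq_zero.1 h1).resolve_left ha
  -- flatness
  have flat : Module.Flat R M := by
    rw [Module.Flat.iff_rTensor_injective']
    intro I
    obtain ⟨a, ha⟩ : I.IsPrincipal := IsPrincipalIdealRing.principal I
    subst ha
    by_cases ha0 : a = 0
    · subst ha0
      have hb : (Submodule.span R ({0} : Set R)) = (⊥ : Submodule R R) := Submodule.span_zero_singleton R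
      haveI : Subsingleton (Submodule.span R ({0} : Set R)) := by
        rw [hb]; infer_instance
      intro x y _
      exact Subsingleton.elim x y
    · obtain ⟨e, he⟩ : ∃ e : R ≃ₗ[R] (Submodule.span R ({a} : Set R)),
          ∀ r : R, ((e r : R) = a * r) :=
        ⟨LinearEquiv.toSpanNonzeroSingleton R R a ha0, fun r => by
          rw [LinearEquiv.toSpanNonzeroSingleton_apply]
          simp [smul_eq_mul, mul_comm]⟩
      have hmap : (Submodule.subtype (Submodule.span R ({a} : Set R))).comp e.toLinearMap
          = a • (LinearMap.id : R →ₗ[R] R) := by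
        ext
        simpa using he 1
      have hcomp : (LinearMap.rTensor M
            (Submodule.subtype (Submodule.span R ({a} : Set R)))).comp
          (LinearMap.rTensor M e.toLinearMap)
          = a • (LinearMap.id : R ⊗[R] M →ₗ[R] R ⊗[R] M) := by
        rw [← LinearMap.rTensor_comp, hmap]
        ext r m
        simp [TensorProduct.smul_tmul']
      have hsmul_inj : Function.Injective
          (fun z : R ⊗[R] M => a • z) := by
        intro x y hxy
        have h1 : a • x = a • y := hxy
        have h2 : a • ((TensorProduct.lid R M) x) = a • ((TensorProduct.lid R M) y) := by
          rw [← map_smul, ← map_smul, h1]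
        have h3 : a • ((TensorProduct.lid R M) x - (TensorProduct.lid R M) y) = 0 := by
          rw [smul_sub, h2, sub_self]
        have h4 := hTF a _ ha0 h3
        exact (TensorProduct.lid R M).injective (sub_eq_zero.mp h4)
      intro x y hxy
      obtain ⟨x', rfl⟩ := (LinearEquiv.rTensor M e).surjective x
      obtain ⟨y', rfl⟩ := (LinearEquiv.rTensor M e).surjective y
      have hx' : ∀ z : R ⊗[R] M,
          LinearMap.rTensor M (Submodule.subtype (Submodule.span R ({a} : Set R)))
            ((LinearEquiv.rTensor M e) z) = a • z := by
        intro z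
        have h0 : (LinearEquiv.rTensor M e) z
            = LinearMap.rTensor M (e : R →ₗ[R] (Submodule.span R ({a} : Set R))) z := rfl
        rw [h0, ← LinearMap.comp_apply, hcomp]
        simp
      rw [hx' x', hx' y'] at hxy
      exact congrArg _ (hsmul_inj hxy)
  -- separatedness
  have hItop : (Ideal.span {π} : Ideal R) ≠ ⊤ :=
    fun h => hπ.not_isUnit (Ideal.span_singleton_eq_top.mp h)
  have hRsep : (⨅ n : ℕ, (Ideal.span {π} : Ideal R) ^ n) = ⊥ :=
    Ideal.iInf_pow_eq_bot_of_isLocalRing _ hItop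
  have hsep : (⨅ n : ℕ, (Ideal.span {π} ^ n) • (⊤ : Submodule R M)) = ⊥ := by
    rw [eq_bot_iff]
    intro x hx
    simp only [Submodule.mem_iInf] at hx
    have hx0 : x = 0 := by
      apply hM
      ext f
      simp only [Module.Dual.eval_apply, map_zero, LinearMap.zero_apply]
      have hfx : ∀ n : ℕ, f x ∈ (Ideal.span {π} : Ideal R) ^ n := by
        intro n
        have h1 : f x ∈ Submodule.map f ((Ideal.span {π} ^ n) • (⊤ : Submodule R M)) :=
          Submodule.mem_map_of_mem (hx n)
        rw [Submodule.map_smul''] at h1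
        have h2 : (Ideal.span {π} ^ n) • (Submodule.map f ⊤) ≤
            (Ideal.span {π} ^ n) • (⊤ : Submodule R R) :=
          Submodule.smul_mono le_rfl le_top
        have h3 := h2 h1
        rwa [Ideal.smul_eq_mul, Ideal.mul_top] at h3
      have : f x ∈ (⨅ n : ℕ, (Ideal.span {π} : Ideal R) ^ n) :=
        Submodule.mem_iInf _ |>.mpr hfx
      rw [hRsep] at this
      exact Ideal.mem_bot.mp this
    simpa [hx0]
  refine ⟨flat, hsep, fun hnt => ?_⟩
  -- faithful flatness
  refine { toFlat := flat, submodule_ne_top := ?_ }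
  intro m hm hmtop
  have hmeq : m = Ideal.span {π} := by
    rw [IsLocalRing.eq_maximalIdeal hm, hπ.maximalIdeal_eq]
  subst hmeq
  -- span{π} • ⊤ = ⊤ implies span{π}^n • ⊤ = ⊤ for all n
  have hpow : ∀ n : ℕ, (Ideal.span {π} ^ n) • (⊤ : Submodule R M) = ⊤ := by
    intro n
    induction n with
    | zero => simp
    | succ n ih =>
      rw [pow_succ, mul_comm, mul_smul, ih, hmtop]
  have : (⨅ n : ℕ, (Ideal.span {π} ^ n) • (⊤ : Submodule R M)) = ⊤ := by
    simp [hpow]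
  rw [hsep] at this
  obtain ⟨x, y, hxy⟩ := hnt
  apply hxy
  have hx : x ∈ (⊥ : Submodule R M) := this ▸ Submodule.mem_top
  have hy : y ∈ (⊥ : Submodule R M) := this ▸ Submodule.mem_top
  simp only [Submodule.mem_bot] at hx hy
  rw [hx, hy]
end

section
/- Let p be a prime, n ≥ 1 an integer, and R a discrete valuation ring of mixed characteristic (0,p) with uniformizer π and normalized valuation v. Assume R contains a primitive pⁿ-th root of unity and let λ ∈ R be a nonzero element with p^{n-1}(p-1)·v(λ) ≤ v(p). Let A be a Noetherian integrally closed integral domain that is a faithfully flat R-algebra, such that A/πA is an integral domain and π lies in the Jacobson radical of A. Then for every unit x ∈ A^*: x^{pⁿ} ≡ 1 (mod λ^{pⁿ}A) if and only if x ≡ 1 (mod λA). -/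
open Polynomial

/-- Over any ring, an element of a flat algebra: scalars act injectively, so the
algebra map kills no nonzero element of a domain. -/
lemma stmt8_algebraMap_ne_zero {R A : Type*} [CommRing R] [IsDomain R] [CommRing A]
    [Nontrivial A] [Algebra R A] [Module.Flat R A] {r : R} (hr : r ≠ 0) :
    algebraMap R A r ≠ 0 := by
  intro h0
  have finj : Function.Injective (LinearMap.lsmul R R r) := by
    intro a b hab
    simp only [LinearMap.lsmul_apply, smul_eq_mul] at hab
    exact mul_left_cancel₀ hr hab
  have hinj : Function.Injective (LinearMap.lTensor A (LinearMap.lsmul R R r)) :=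
    Module.Flat.lTensor_preserves_injective_linearMap _ finj
  have key : ((1 : A) ⊗ₜ[R] r : TensorProduct R A R) = 0 := by
    have e1 : ((1 : A) ⊗ₜ[R] r : TensorProduct R A R) = r • ((1 : A) ⊗ₜ[R] (1 : R)) := by
      rw [← TensorProduct.tmul_smul, smul_eq_mul, mul_one]
    rw [e1, TensorProduct.smul_tmul', ← Algebra.algebraMap_eq_smul_one, h0,
      TensorProduct.zero_tmul]
  have h2 : ((1 : A) ⊗ₜ[R] (1 : R) : TensorProduct R A R) = 0 := by
    apply hinj
    rw [map_zero]
    simpa [LinearMap.lTensor_tmul, LinearMap.lsmul_apply, smul_eq_mul, mul_one] using key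
  have h3 := congrArg (TensorProduct.rid R A) h2
  rw [map_zero, TensorProduct.rid_tmul, one_smul] at h3
  exact one_ne_zero h3

/-- The easy implication: if `d^φ ∣ p` then `x ≡ 1 [d]` implies `x^{p^j} ≡ 1 [d^{p^j}]`
for all `j ≤ n`. -/
lemma stmt8_pow_cong {A : Type*} [CommRing A] {p : ℕ} (hp : p.Prime) {n : ℕ}
    {d : A} (hd : d ^ (p ^ (n - 1) * (p - 1)) ∣ (p : A)) {x : A} (h : d ∣ x - 1) :
    ∀ j, j ≤ n → d ^ (p ^ j) ∣ x ^ (p ^ j) - 1 := by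
  intro j hj
  induction j with
  | zero => simpa using h
  | succ j ih =>
    have hy : d ^ (p ^ j) ∣ x ^ (p ^ j) - 1 := ih (le_trans (Nat.le_succ j) hj)
    set s : A := x ^ (p ^ j) - 1 with hs
    have hys : x ^ (p ^ (j + 1)) = (s + 1) ^ p := by
      rw [pow_succ, pow_mul]
      congr 1
      rw [hs]; ring
    have key : x ^ (p ^ (j + 1)) - 1
        = ∑ k ∈ Finset.range p, s ^ (k + 1) * (p.choose (k + 1) : A) := by
      rw [hys, add_pow]
      simp only [one_pow, mul_one]
      rw [Finset.sum_range_succ']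
      simp
    rw [key]
    apply Finset.dvd_sum
    intro k hk
    have hklt : k < p := Finset.mem_range.mp hk
    by_cases hkp : k + 1 = p
    · have h1 : d ^ (p ^ (j + 1)) ∣ s ^ (k + 1) := by
        rw [hkp, pow_succ, pow_mul]
        exact pow_dvd_pow_of_dvd hy p
      exact h1.mul_right _
    · have hklt' : k + 1 < p := lt_of_le_of_ne (Nat.succ_le_of_lt hklt) hkp
      have hpdvd : p ∣ p.choose (k + 1) := hp.dvd_choose_self (Nat.succ_ne_zero k) hklt'
      have h1 : d ^ (p ^ (n - 1) * (p - 1) + p ^ j) ∣ (p : A) * s := by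
        rw [pow_add]
        exact mul_dvd_mul hd hy
      have h2 : p ^ (j + 1) ≤ p ^ (n - 1) * (p - 1) + p ^ j := by
        have hj' : j ≤ n - 1 := by omega
        have e : p ^ (j + 1) = p ^ j * (p - 1) + p ^ j := by
          have hp1 : p - 1 + 1 = p := by
            have := hp.one_le; omega
          calc p ^ (j + 1) = p ^ j * p := pow_succ p j
            _ = p ^ j * (p - 1 + 1) := by rw [hp1]
            _ = p ^ j * (p - 1) + p ^ j := by ring
        rw [e]
        have : p ^ j * (p - 1) ≤ p ^ (n - 1) * (p - 1) :=
          Nat.mul_le_mul_right _ (Nat.pow_le_pow_right hp.pos hj')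
        omega
      have h3 : d ^ (p ^ (j + 1)) ∣ (p : A) * s := (pow_dvd_pow d h2).trans h1
      obtain ⟨c, hc⟩ := hpdvd
      refine h3.trans ⟨s ^ k * (c : A), ?_⟩
      rw [hc]
      push_cast
      ring

/-- Let `p` be a prime, `n ≥ 1`, and `R` a discrete valuation ring of mixed characteristic
`(0,p)` with uniformizer `π`, containing a primitive `pⁿ`-th root of unity, and let
`lam ∈ R` be nonzero with `p^{n-1}(p-1)·v(lam) ≤ v(p)` (expressed as the divisibility
`lam^{p^{n-1}(p-1)} ∣ p`).  Let `A` be a Noetherian integrally closed integral domain which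
is a faithfully flat `R`-algebra such that `A/πA` is an integral domain and `π` lies in the
Jacobson radical of `A`.  Then for every unit `x` of `A`:
`x^{pⁿ} ≡ 1 (mod lam^{pⁿ}A)` if and only if `x ≡ 1 (mod lam·A)`. -/
theorem stmt8 (p : ℕ) (hp : p.Prime) (n : ℕ) (hn : 1 ≤ n)
    (R : Type*) [CommRing R] [IsDomain R] [IsDiscreteValuationRing R] [CharZero R]
    (π : R) (hπ : Irreducible π)
    (hres : CharP (R ⧸ Ideal.span {π}) p)
    (ζ : R) (hζ : IsPrimitiveRoot ζ (p ^ n))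
    (lam : R) (hlam : lam ≠ 0) (hlamp : lam ^ (p ^ (n - 1) * (p - 1)) ∣ (p : R))
    (A : Type*) [CommRing A] [IsDomain A] [IsNoetherianRing A] [IsIntegrallyClosed A]
    [Algebra R A] [Module.FaithfullyFlat R A]
    (hAint : IsDomain (A ⧸ Ideal.span {algebraMap R A π}))
    (hjac : algebraMap R A π ∈ (⊥ : Ideal A).jacobson) :
    ∀ x : Aˣ,
      ((x : A) ^ (p ^ n) - 1 ∈ Ideal.span {algebraMap R A (lam ^ (p ^ n))} ↔
        (x : A) - 1 ∈ Ideal.span {algebraMap R A lam}) := by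
  have hppos : 0 < p ^ n := pow_pos hp.pos n
  haveI : NeZero (p ^ n) := ⟨hppos.ne'⟩
  set f : R →+* A := algebraMap R A with hf
  -- injectivity of the algebra map
  have hker : ∀ r : R, f r = 0 → r = 0 := by
    intro r hr
    by_contra hr0
    exact stmt8_algebraMap_ne_zero hr0 hr
  have hfinj : Function.Injective f := (injective_iff_map_eq_zero f).mpr hker
  -- π is prime in A
  have hπ'0 : f π ≠ 0 := fun h => hπ.ne_zero (hker _ h)
  have hsp : (Ideal.span {f π}).IsPrime :=
    (Ideal.Quotient.isDomain_iff_prime (Ideal.span {f π})).mp hAint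
  have hprime : Prime (f π) := (Ideal.span_singleton_prime hπ'0).mp hsp
  -- decompose lam
  obtain ⟨m, u, hu⟩ := IsDiscreteValuationRing.eq_unit_mul_pow_irreducible hlam hπ
  -- `lam ∣ ζ - 1` in `R`
  have hφpos : p ^ (n - 1) * (p - 1) ≠ 0 := by
    have h2 := hp.two_le
    have h3 : 0 < p ^ (n - 1) := pow_pos hp.pos _
    have h4 : 0 < p - 1 := by omega
    exact Nat.mul_ne_zero h3.ne' h4.ne'
  have heval : (Polynomial.cyclotomic (p ^ n) R).eval 1 = p := by
    haveI : Fact p.Prime := ⟨hp⟩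
    obtain ⟨n', rfl⟩ : ∃ n', n = n' + 1 := ⟨n - 1, by omega⟩
    exact Polynomial.eval_one_cyclotomic_prime_pow n'
  have heval' : ∏ μ ∈ primitiveRoots (p ^ n) R, (1 - μ) = (p : R) := by
    rw [← heval, Polynomial.cyclotomic_eq_prod_X_sub_primitiveRoots hζ]
    simp [Polynomial.eval_prod]
  have hdvd : (p : R) ∣ (1 - ζ) ^ ((p ^ n).totient) := by
    rw [← heval', ← hζ.card_primitiveRoots, ← Finset.prod_const]
    apply Finset.prod_dvd_prod_of_dvd
    intro μ hμ
    have hμp : IsPrimitiveRoot μ (p ^ n) := (mem_primitiveRoots hppos).mp hμ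
    obtain ⟨i, _, hiμ⟩ := hμp.eq_pow_of_pow_eq_one hζ.pow_eq_one
    have h1 : (1 : R) - μ ∣ 1 ^ i - μ ^ i := sub_dvd_pow_sub_pow 1 μ i
    rw [hiμ, one_pow] at h1
    exact h1
  have htot : (p ^ n).totient = p ^ (n - 1) * (p - 1) := Nat.totient_prime_pow hp (by omega)
  have hlz : lam ∣ 1 - ζ := by
    have h1 : lam ^ (p ^ (n - 1) * (p - 1)) ∣ (1 - ζ) ^ (p ^ (n - 1) * (p - 1)) := by
      refine hlamp.trans ?_
      rw [← htot]
      exact hdvd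
    exact (IsIntegrallyClosed.pow_dvd_pow_iff hφpos).mp h1
  have hz1 : lam ∣ ζ - 1 := by
    have := (dvd_neg (α := R)).mpr hlz
    rwa [neg_sub] at this
  have hzi : ∀ i : ℕ, lam ∣ ζ ^ i - 1 := by
    intro i
    refine hz1.trans ?_
    have := sub_dvd_pow_sub_pow ζ 1 i
    rwa [one_pow] at this
  -- ζ is a primitive root in A
  have hζ' : IsPrimitiveRoot (f ζ) (p ^ n) := hζ.map_of_injective hfinj
  intro x
  constructor
  · -- hard direction
    intro hx
    rw [Ideal.mem_span_singleton] at hx ⊢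
    rw [map_pow] at hx
    -- the factorization of x^{p^n} - 1
    have hfact : (x : A) ^ (p ^ n) - 1
        = ∏ c ∈ Polynomial.nthRootsFinset (p ^ n) (1 : A), ((x : A) - c) := by
      have h := Polynomial.X_pow_sub_one_eq_prod hppos hζ'
      have := congrArg (Polynomial.eval (x : A)) h
      simpa [Polynomial.eval_prod] using this
    -- π-power divisibility
    set w : Aˣ := Units.map (f : R →* A) u with hw
    have hflam : f lam = (w : A) * f π ^ m := by
      rw [hu]
      simp [hw, Units.coe_map]
    have hπdvd : f π ^ (m * p ^ n) ∣ (x : A) ^ (p ^ n) - 1 := by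
      refine dvd_trans ?_ hx
      rw [hflam, mul_pow, ← pow_mul]
      exact dvd_mul_left _ _
    have hsum : ((m * p ^ n : ℕ) : ℕ∞)
        ≤ ∑ c ∈ Polynomial.nthRootsFinset (p ^ n) (1 : A), emultiplicity (f π) ((x : A) - c) := by
      rw [← Finset.emultiplicity_prod hprime, ← hfact]
      exact le_emultiplicity_of_pow_dvd hπdvd
    have hcard : (Polynomial.nthRootsFinset (p ^ n) (1 : A)).card = p ^ n := hζ'.card_nthRootsFinset
    have hne : (Polynomial.nthRootsFinset (p ^ n) (1 : A)).Nonempty := by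
      rw [← Finset.card_pos, hcard]; exact hppos
    have hpig : ∃ c ∈ Polynomial.nthRootsFinset (p ^ n) (1 : A),
        (m : ℕ∞) ≤ emultiplicity (f π) ((x : A) - c) := by
      by_contra hno
      push_neg at hno
      rcases Nat.eq_zero_or_pos m with hm0 | hm1
      · obtain ⟨c, hc⟩ := hne
        exact absurd (hno c hc) (by simp [hm0])
      · have hbound : ∀ c ∈ Polynomial.nthRootsFinset (p ^ n) (1 : A),
            emultiplicity (f π) ((x : A) - c) ≤ ((m - 1 : ℕ) : ℕ∞) := by
          intro c hc
          have h := hno c hc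
          have hne_top : emultiplicity (f π) ((x : A) - c) ≠ ⊤ := ne_top_of_lt h
          obtain ⟨k, hk⟩ := WithTop.ne_top_iff_exists.mp hne_top
          rw [← hk] at h ⊢
          have hkm : k < m := WithTop.coe_lt_coe.mp h
          exact WithTop.coe_le_coe.mpr (Nat.le_sub_one_of_lt hkm)
        have hsum2 : ∑ c ∈ Polynomial.nthRootsFinset (p ^ n) (1 : A),
            emultiplicity (f π) ((x : A) - c)
            ≤ (Polynomial.nthRootsFinset (p ^ n) (1 : A)).card • ((m - 1 : ℕ) : ℕ∞) :=
          Finset.sum_le_card_nsmul _ _ _ hbound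
        rw [hcard] at hsum2
        have hfin : ((m * p ^ n : ℕ) : ℕ∞) ≤ ((p ^ n * (m - 1) : ℕ) : ℕ∞) := by
          refine hsum.trans (hsum2.trans ?_)
          rw [nsmul_eq_mul]
          push_cast
          ring_nf
          exact le_rfl
        have hfin' : m * p ^ n ≤ p ^ n * (m - 1) := by exact_mod_cast hfin
        rw [mul_comm] at hfin'
        have e2 : p ^ n * (m - 1) + p ^ n = p ^ n * m := by
          have hm : m - 1 + 1 = m := by omega
          calc p ^ n * (m - 1) + p ^ n = p ^ n * (m - 1 + 1) := by ring
            _ = p ^ n * m := by rw [hm]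
        omega
    obtain ⟨c, hc, hmc⟩ := hpig
    have hdc : f π ^ m ∣ (x : A) - c := pow_dvd_of_le_emultiplicity hmc
    have hlamdvd : f lam ∣ (x : A) - c := by
      obtain ⟨t, ht⟩ := hdc
      refine ⟨(↑w⁻¹ : A) * t, ?_⟩
      rw [ht, hflam,
        show (w : A) * f π ^ m * ((↑w⁻¹ : A) * t) = ((w : A) * (↑w⁻¹ : A)) * (f π ^ m * t) from
          by ring, Units.mul_inv, one_mul]
    have hcroot : c ^ (p ^ n) = 1 := (Polynomial.mem_nthRootsFinset hppos 1).mp hc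
    obtain ⟨i, _, hci⟩ := hζ'.eq_pow_of_pow_eq_one hcroot
    have hc1 : f lam ∣ c - 1 := by
      have := map_dvd f (hzi i)
      rw [map_sub, map_pow, map_one, hci] at this
      exact this
    have : (x : A) - 1 = ((x : A) - c) + (c - 1) := by ring
    rw [this]
    exact dvd_add hlamdvd hc1
  · -- easy direction
    intro hx
    rw [Ideal.mem_span_singleton] at hx ⊢
    rw [map_pow]
    have hd : f lam ^ (p ^ (n - 1) * (p - 1)) ∣ (p : A) := by
      have := map_dvd f hlamp
      rwa [map_pow, map_natCast] at this
    exact stmt8_pow_cong hp hd hx n le_rfl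
end

section
/- Let R be a discrete valuation ring with uniformizer π whose residue field has characteristic p > 0, and let A be a commutative R-algebra that is flat as an R-module and such that A/πA is an integral domain. Let γ₁ ≤ m and γ₂ be natural numbers, and let H = Σ_{k=0}^{p-1} a_k T^k ∈ A[T] be a polynomial of degree at most p−1 whose constant coefficient a₀ lies in πA but which has some coefficient not lying in πA; let H' denote its formal derivative. If b ∈ πR satisfies b·H ≡ π^{m-γ₁}·H' (mod π^{γ₂}A[T]), then b ∈ π^{γ₂}R. -/
open Polynomial in
/-- Let `R` be a discrete valuation ring with uniformizer `π` whose residue field has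
characteristic `p > 0`, and let `A` be a commutative `R`-algebra, flat as an `R`-module,
such that `A/πA` is an integral domain.  Let `γ₁ ≤ m`, `γ₂` be natural numbers and let
`H ∈ A[T]` be of degree at most `p-1`, with constant coefficient in `πA` but some
coefficient not in `πA`.  If `b ∈ πR` satisfies `b·H ≡ π^{m-γ₁}·H' (mod π^{γ₂}A[T])`,
then `b ∈ π^{γ₂}R`. -/
theorem stmt10 (R : Type*) [CommRing R] [IsDomain R] [IsDiscreteValuationRing R]
    (π : R) (hπ : Irreducible π)
    (p : ℕ) (hp : 0 < p) (hres : CharP (R ⧸ Ideal.span {π}) p)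
    (A : Type*) [CommRing A] [Algebra R A] [Module.Flat R A]
    (hAdom : IsDomain (A ⧸ Ideal.span {algebraMap R A π}))
    (m γ₁ γ₂ : ℕ) (hγ₁m : γ₁ ≤ m)
    (H : A[X]) (hdeg : H.natDegree ≤ p - 1)
    (h0 : H.coeff 0 ∈ Ideal.span {algebraMap R A π})
    (hH : ∃ k, H.coeff k ∉ Ideal.span {algebraMap R A π})
    (b : R) (hb : π ∣ b)
    (h : C (algebraMap R A b) * H - C (algebraMap R A (π ^ (m - γ₁))) * derivative H ∈
      Ideal.span {(C (algebraMap R A (π ^ γ₂)) : A[X])}) :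
    π ^ γ₂ ∣ b := by
  classical
  have hπ0 : π ≠ 0 := hπ.ne_zero
  set φ := algebraMap R A with hφ
  -- π is regular on A (flatness)
  have hregR : IsSMulRegular R π := fun x y hxy =>
    mul_left_cancel₀ hπ0 (by simpa [smul_eq_mul] using hxy)
  have hregT : IsSMulRegular (TensorProduct R A R) π := hregR.lTensor A
  have hregA : IsSMulRegular A π :=
    hregT.of_injective (TensorProduct.rid R A).symm.toLinearMap
      (TensorProduct.rid R A).symm.injective
  have hcan : ∀ x y : A, φ π * x = φ π * y → x = y := by
    intro x y hxy
    exact hregA (by simpa [Algebra.smul_def] using hxy)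
  have hcanpow : ∀ (c : ℕ) (x y : A), φ π ^ c * x = φ π ^ c * y → x = y := by
    intro c
    induction c with
    | zero => simp
    | succ k ih =>
      intro x y hxy
      refine hcan x y (ih _ _ ?_)
      rw [show φ π ^ k * (φ π * x) = φ π ^ (k+1) * x by ring,
        show φ π ^ k * (φ π * y) = φ π ^ (k+1) * y by ring]
      exact hxy
  -- p is prime
  have hprime : p.Prime := by
    haveI := hres
    haveI : (Ideal.span {π}).IsMaximal := hπ.maximalIdeal_eq ▸ IsLocalRing.maximalIdeal.isMaximal R
    rcases CharP.char_is_prime_or_zero (R ⧸ Ideal.span {π}) p with hq | hq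
    · exact hq
    · omega
  -- π divides p in A
  have hpA : φ π ∣ (p : A) := by
    haveI := hres
    have h1 : π ∣ (p : R) := by
      rw [← Ideal.mem_span_singleton, ← Ideal.Quotient.eq_zero_iff_mem]
      rw [map_natCast]
      exact CharP.cast_eq_zero _ p
    have := map_dvd φ h1
    rwa [map_natCast] at this
  -- min witness j
  set j := Nat.find hH with hjdef
  have hj : H.coeff j ∉ Ideal.span {φ π} := Nat.find_spec hH
  have hjmin : ∀ i < j, H.coeff i ∈ Ideal.span {φ π} := fun i hi =>
    of_not_not (Nat.find_min hH hi)
  have hj0 : 0 < j := by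
    rcases Nat.eq_zero_or_pos j with hz | hz
    · exact absurd (hz ▸ h0) hj
    · exact hz
  have hjdeg : j ≤ H.natDegree := by
    by_contra hlt
    exact hj (by rw [coeff_eq_zero_of_natDegree_lt (by omega)]; exact Ideal.zero_mem _)
  -- max witness K
  set K := Nat.findGreatest (fun k => H.coeff k ∉ Ideal.span {φ π}) H.natDegree with hKdef
  have hK : H.coeff K ∉ Ideal.span {φ π} :=
    Nat.findGreatest_spec (P := fun k => H.coeff k ∉ Ideal.span {φ π}) hjdeg hj
  have hKmax : ∀ i, K < i → H.coeff i ∈ Ideal.span {φ π} := by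
    intro i hi
    by_cases hile : i ≤ H.natDegree
    · exact of_not_not (Nat.findGreatest_is_greatest (P := fun k => H.coeff k ∉ Ideal.span {φ π}) hi hile)
    · rw [coeff_eq_zero_of_natDegree_lt (by omega)]; exact Ideal.zero_mem _
  -- main induction on γ₂
  induction γ₂ with
  | zero => simp only [pow_zero]; exact one_dvd b
  | succ n ih =>
    have hweak : C (φ (π ^ n)) ∣
        C (φ b) * H - C (φ (π ^ (m - γ₁))) * derivative H := by
      rw [Ideal.mem_span_singleton] at h
      exact dvd_trans (map_dvd C (map_dvd φ (pow_dvd_pow π n.le_succ))) h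
    have hbn : π ^ n ∣ b := ih (Ideal.mem_span_singleton.mpr hweak)
    obtain ⟨b', rfl⟩ := hbn
    by_contra hu
    have hub' : IsUnit b' := by
      by_contra hnu
      have : π ∣ b' := by
        rw [← Ideal.mem_span_singleton, ← hπ.maximalIdeal_eq]
        exact hnu
      obtain ⟨c, rfl⟩ := this
      exact hu ⟨c, by ring⟩
    -- coefficientwise congruence
    rw [Ideal.mem_span_singleton] at h
    obtain ⟨G, hG⟩ := h
    have hco : ∀ nn : ℕ, φ π ^ n * φ b' * H.coeff nn
        - φ π ^ (m - γ₁) * (H.coeff (nn + 1) * (nn + 1 : ℕ)) = φ π ^ (n+1) * G.coeff nn := by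
      intro nn
      have h1 := congrArg (fun q : A[X] => q.coeff nn) hG
      simp only [coeff_sub, coeff_C_mul, coeff_derivative] at h1
      simp only [map_mul, map_pow] at h1
      exact_mod_cast h1
    by_cases hcase : n ≤ m - γ₁
    · -- use K
      obtain ⟨d, hd⟩ := Ideal.mem_span_singleton.mp (hKmax (K+1) (Nat.lt_succ_self K))
      have h1 := hco K
      rw [hd] at h1
      have hsplit : φ π ^ (m - γ₁) = φ π ^ n * φ π ^ (m - γ₁ - n) := by
        rw [← pow_add]; congr 1; omega
      have h2 : φ π ^ n * (φ b' * H.coeff K) =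
          φ π ^ n * (φ π * (G.coeff K + φ π ^ (m - γ₁ - n) * ((K+1 : ℕ) : A) * d)) := by
        linear_combination h1 + (φ π * d * ((K+1 : ℕ) : A)) * hsplit
      have h3 : φ b' * H.coeff K = φ π * (G.coeff K + φ π ^ (m - γ₁ - n) * ((K+1 : ℕ) : A) * d) :=
        hcanpow n _ _ h2
      obtain ⟨v, hv⟩ := (hub'.map φ).exists_left_inv
      refine hK (Ideal.mem_span_singleton.mpr ⟨v * (G.coeff K + φ π ^ (m - γ₁ - n) * ((K+1 : ℕ) : A) * d), ?_⟩)
      linear_combination v * h3 - H.coeff K * hv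
    · -- use j
      push_neg at hcase
      obtain ⟨e, he⟩ := Ideal.mem_span_singleton.mp (hjmin (j-1) (by omega))
      have h1 := hco (j-1)
      rw [show j - 1 + 1 = j by omega, he] at h1
      have hsplit2 : φ π ^ (n + 1) = φ π ^ (m - γ₁) * (φ π * φ π ^ (n - (m - γ₁))) := by
        rw [← pow_succ', ← pow_add]; congr 1; omega
      have h2 : φ π ^ (m - γ₁) * (H.coeff j * ((j : ℕ) : A)) =
          φ π ^ (m - γ₁) * (φ π * (φ π ^ (n - (m - γ₁)) * (φ b' * e - G.coeff (j-1)))) := by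
        linear_combination -h1 + (φ b' * e - G.coeff (j-1)) * hsplit2
      have h3 : φ π ∣ H.coeff j * ((j : ℕ) : A) :=
        ⟨_, hcanpow (m - γ₁) _ _ h2⟩
      -- Bezout: j coprime to p
      have hjp : j < p := by omega
      have hpj : ¬ p ∣ j := fun hdvd => by
        have := Nat.le_of_dvd hj0 hdvd
        omega
      have hcop : Nat.gcd j p = 1 := (Nat.coprime_comm.mp ((Nat.Prime.coprime_iff_not_dvd hprime).mpr hpj))
      have hbez : ((j : ℤ) * Nat.gcdA j p + (p : ℤ) * Nat.gcdB j p : ℤ) = 1 := by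
        rw [← Nat.gcd_eq_gcd_ab, hcop]
        norm_num
      have hcast : ((j : ℕ) : A) * ((Nat.gcdA j p : ℤ) : A) + ((p : ℕ) : A) * ((Nat.gcdB j p : ℤ) : A) = 1 := by
        have := congrArg (fun z : ℤ => (z : A)) hbez
        push_cast at this
        exact_mod_cast this
      refine hj (Ideal.mem_span_singleton.mpr ?_)
      have : H.coeff j = ((Nat.gcdA j p : ℤ) : A) * (H.coeff j * ((j:ℕ) : A))
          + ((Nat.gcdB j p : ℤ) : A) * ((p : A) * H.coeff j) := by
        calc H.coeff j = (((j : ℕ) : A) * ((Nat.gcdA j p : ℤ) : A)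
              + ((p : ℕ) : A) * ((Nat.gcdB j p : ℤ) : A)) * H.coeff j := by rw [hcast, one_mul]
          _ = _ := by push_cast; ring
      rw [this]
      exact dvd_add (Dvd.dvd.mul_left h3 _) (Dvd.dvd.mul_left (hpA.mul_right _) _)
end

section
/- Let R be a discrete valuation ring with uniformizer π, let A be a commutative R-algebra, let b ∈ R, let γ₁ ≤ m and γ₂ be natural numbers, and let H ∈ A[T]. Suppose b·H − π^{m-γ₁}·H' ∈ π^{γ₂}A[T], where H' is the formal derivative of H. Then for every integer k ≥ 1, writing H^{(k)} for the k-th iterated formal derivative of H, one has b^k·H − π^{k(m-γ₁)}·H^{(k)} ∈ π^{γ₂}·b^{k-1}·A[T] + π^{γ₂+(k-1)(m-γ₁)}·A[T]. -/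
open Polynomial in
private lemma key_dvr {R : Type*} [CommRing R] [IsDomain R] [IsDiscreteValuationRing R]
    (π b : R) (e n : ℕ) :
    ∃ c₁ c₂ : R, π ^ (n * e) * b = b ^ (n + 1) * c₁ + π ^ ((n + 1) * e) * c₂ := by
  rcases ValuationRing.dvd_total (π ^ e) b with ⟨c, hc⟩ | ⟨d, hd⟩
  · refine ⟨0, c, ?_⟩
    rw [hc]
    ring
  · refine ⟨d ^ n, 0, ?_⟩
    have h1 : π ^ (n * e) = (π ^ e) ^ n := by rw [← pow_mul, Nat.mul_comm]
    rw [h1, hd]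
    ring

open Polynomial in
/-- Let `R` be a discrete valuation ring with uniformizer `π`, `A` a commutative
`R`-algebra, `b ∈ R`, `γ₁ ≤ m`, `γ₂` natural numbers and `H ∈ A[T]`.  If
`b·H − π^{m-γ₁}·H' ∈ π^{γ₂}A[T]`, then for every `k ≥ 1`,
`b^k·H − π^{k(m-γ₁)}·H^{(k)} ∈ π^{γ₂}·b^{k-1}·A[T] + π^{γ₂+(k-1)(m-γ₁)}·A[T]`,
where `H^{(k)}` is the `k`-th iterated formal derivative of `H`. -/
theorem stmt11 (R : Type*) [CommRing R] [IsDomain R] [IsDiscreteValuationRing R]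
    (π : R) (hπ : Irreducible π)
    (A : Type*) [CommRing A] [Algebra R A]
    (b : R) (m γ₁ γ₂ : ℕ) (hγ₁m : γ₁ ≤ m)
    (H : A[X])
    (h : C (algebraMap R A b) * H - C (algebraMap R A (π ^ (m - γ₁))) * derivative H ∈
      Ideal.span {(C (algebraMap R A (π ^ γ₂)) : A[X])}) :
    ∀ k : ℕ, 1 ≤ k →
      C (algebraMap R A (b ^ k)) * H -
          C (algebraMap R A (π ^ (k * (m - γ₁)))) * (derivative^[k] H) ∈
        Ideal.span {(C (algebraMap R A (π ^ γ₂ * b ^ (k - 1))) : A[X]),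
          (C (algebraMap R A (π ^ (γ₂ + (k - 1) * (m - γ₁)))) : A[X])} := by
  set φ := algebraMap R A with hφ
  obtain ⟨Q, hQ⟩ : ∃ Q, C (φ b) * H - C (φ (π ^ (m - γ₁))) * derivative H =
      C (φ (π ^ γ₂)) * Q := Ideal.mem_span_singleton.mp h
  intro k hk
  obtain ⟨n, rfl⟩ : ∃ n, k = n + 1 := ⟨k - 1, (Nat.succ_pred_eq_of_pos hk).symm⟩
  clear hk
  simp only [Nat.add_sub_cancel]
  induction n with
  | zero =>
    rw [Ideal.mem_span_pair]
    exact ⟨Q, 0, by simpa [mul_comm] using hQ.symm⟩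
  | succ n ih =>
    obtain ⟨x, y, hxy⟩ := Ideal.mem_span_pair.mp ih
    obtain ⟨c₁, c₂, hc⟩ := key_dvr π b (m - γ₁) n
    have hcA : C (φ (π ^ (n * (m - γ₁)))) * C (φ b) =
        C (φ (b ^ (n + 1))) * C (φ c₁) + C (φ (π ^ ((n + 1) * (m - γ₁)))) * C (φ c₂) := by
      have := congrArg (fun r : R => (C (φ r) : A[X])) hc
      simpa only [map_mul, map_add] using this
    have hD : C (φ b) * derivative^[n + 1] H -
        C (φ (π ^ (m - γ₁))) * derivative^[n + 1] (derivative H) =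
        C (φ (π ^ γ₂)) * derivative^[n + 1] Q := by
      have h2 := congrArg (derivative^[n + 1]) hQ
      simp only [iterate_derivative_sub, iterate_derivative_C_mul] at h2
      exact h2
    have hit : derivative^[n + 2] H = derivative^[n + 1] (derivative H) :=
      Function.iterate_succ_apply _ _ _
    rw [Ideal.mem_span_pair, hit]
    refine ⟨x + y * C (φ c₁), y * C (φ c₂) + derivative^[n + 1] Q, ?_⟩
    simp only [map_mul, map_pow, add_mul, one_mul, two_mul, pow_add, pow_succ] at hxy hD hcA ⊢
    linear_combination (C (φ b)) * hxy -
      (C (φ π)) ^ (n * (m - γ₁)) * (C (φ π)) ^ (m - γ₁) * hD -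
      y * (C (φ π)) ^ γ₂ * hcA
end

section
/- Let R be a discrete valuation ring with uniformizer π and fraction field K, and let p ≥ 2 be an integer. Then there do not exist a unit f of the Laurent polynomial ring R[Z, Z⁻¹] and a unit g of the Laurent polynomial ring K[Z, Z⁻¹] such that f·g^p = π·Z in K[Z, Z⁻¹]. -/
open Polynomial LaurentPolynomial

lemma laurent_unit_eq_single {S : Type*} [CommRing S] [IsDomain S]
    (u : (LaurentPolynomial S)ˣ) :
    ∃ (n : ℤ) (a : S), IsUnit a ∧
      (u : LaurentPolynomial S) = LaurentPolynomial.C a * LaurentPolynomial.T n := by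
  obtain ⟨n, f', hfn⟩ := (u : LaurentPolynomial S).exists_T_pow
  obtain ⟨m, g', hgm⟩ := ((u⁻¹ : (LaurentPolynomial S)ˣ) : LaurentPolynomial S).exists_T_pow
  have hmul : f'.toLaurent * g'.toLaurent = T ((n : ℤ) + m) := by
    rw [hfn, hgm, mul_mul_mul_comm, u.mul_inv, one_mul, ← T_add]
  have hfg' : f' * g' = X ^ (n + m) := by
    apply Polynomial.toLaurent_injective
    rw [map_mul, hmul, Polynomial.toLaurent_X_pow]
    norm_cast
  have hdvd : f' ∣ X ^ (n + m) := ⟨g', hfg'.symm⟩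
  obtain ⟨i, hi, hassoc⟩ := (dvd_prime_pow Polynomial.prime_X _).mp hdvd
  obtain ⟨v, hv⟩ := hassoc.symm
  obtain ⟨r, hr, hCr⟩ := Polynomial.isUnit_iff.mp v.isUnit
  have hf' : f' = X ^ i * Polynomial.C r := by rw [hCr, hv]
  refine ⟨(i : ℤ) - n, r, hr, ?_⟩
  have hu : (u : LaurentPolynomial S) = f'.toLaurent * T (-(n : ℤ)) := by
    rw [hfn, mul_assoc, ← T_add, add_neg_cancel, T_zero, mul_one]
  rw [hu, hf', map_mul, Polynomial.toLaurent_X_pow, Polynomial.toLaurent_C,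
    mul_comm (T (i : ℤ)), mul_assoc, ← T_add]
  congr 1


/-- The ring homomorphism `R[Z,Z⁻¹] → K[Z,Z⁻¹]` between Laurent polynomial rings induced by
a ring homomorphism `φ : R → K` on coefficients. -/
noncomputable def LaurentPolynomial.mapRingHom {R K : Type*} [CommSemiring R] [CommSemiring K]
    (φ : R →+* K) : LaurentPolynomial R →+* LaurentPolynomial K :=
  AddMonoidAlgebra.liftNCRingHom (LaurentPolynomial.C.comp φ)
    { toFun := fun n => LaurentPolynomial.T n.toAdd
      map_one' := LaurentPolynomial.T_zero
      map_mul' := fun x y => LaurentPolynomial.T_add x.toAdd y.toAdd }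
    (fun _ _ => Commute.all _ _)

lemma mapRingHom_C_mul_T {R K : Type*} [CommSemiring R] [CommSemiring K]
    (φ : R →+* K) (n : ℤ) (a : R) :
    LaurentPolynomial.mapRingHom φ (LaurentPolynomial.C a * LaurentPolynomial.T n) =
      LaurentPolynomial.C (φ a) * LaurentPolynomial.T n := by
  simp only [LaurentPolynomial.mapRingHom, AddMonoidAlgebra.liftNCRingHom,
    RingHom.coe_mk, MonoidHom.coe_mk, OneHom.coe_mk, AddMonoidHom.toFun_eq_coe]
  rw [← single_eq_C_mul_T]
  erw [AddMonoidAlgebra.liftNC_single]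
  simp [single_eq_C_mul_T]


/-- Let `R` be a discrete valuation ring with uniformizer `π` and fraction field `K`, and
let `p ≥ 2` be an integer.  Then there do not exist a unit `f` of `R[Z,Z⁻¹]` and a unit `g`
of `K[Z,Z⁻¹]` such that `f·g^p = π·Z` in `K[Z,Z⁻¹]`. -/
theorem stmt15 (R : Type*) [CommRing R] [IsDomain R] [IsDiscreteValuationRing R]
    (π : R) (hπ : Irreducible π)
    (K : Type*) [Field K] [Algebra R K] [IsFractionRing R K]
    (p : ℕ) (hp : 2 ≤ p) :
    ¬ ∃ (f : (LaurentPolynomial R)ˣ) (g : (LaurentPolynomial K)ˣ),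
      LaurentPolynomial.mapRingHom (algebraMap R K) (f : LaurentPolynomial R) *
          (g : LaurentPolynomial K) ^ p =
        LaurentPolynomial.C (algebraMap R K π) * LaurentPolynomial.T 1 := by
  rintro ⟨f, g, heq⟩
  set φ := algebraMap R K with hφ
  obtain ⟨mf, a, ha, hfeq⟩ := laurent_unit_eq_single f
  obtain ⟨ng, c, hc, hgeq⟩ := laurent_unit_eq_single g
  rw [hfeq, hgeq, mapRingHom_C_mul_T] at heq
  have hgp : (LaurentPolynomial.C c * T ng) ^ p = LaurentPolynomial.C (c ^ p) * T (p * ng) := by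
    rw [mul_pow, ← map_pow, T_pow]
  rw [hgp] at heq
  have heq2 : LaurentPolynomial.C (φ a * c ^ p) * T (mf + p * ng) =
      LaurentPolynomial.C (φ π) * T 1 := by
    rw [map_mul, T_add]; rw [← heq]; ring
  have hπ0 : φ π ≠ 0 := (map_ne_zero_iff φ (IsFractionRing.injective R K)).mpr hπ.ne_zero
  have hcoeff : φ a * c ^ p = φ π := by
    rw [← single_eq_C_mul_T, ← single_eq_C_mul_T] at heq2
    rcases AddMonoidAlgebra.single_inj.mp heq2 with ⟨-, h⟩ | ⟨-, h⟩
    · exact h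
    · exact absurd h hπ0
  have hc0 : c ≠ 0 := hc.ne_zero
  obtain ⟨⟨r, s⟩, hrs⟩ := IsLocalization.surj (nonZeroDivisors R) c
  simp only at hrs
  have hs0 : (s : R) ≠ 0 := nonZeroDivisors.coe_ne_zero s
  have hφs : φ s ≠ 0 := (map_ne_zero_iff φ (IsFractionRing.injective R K)).mpr hs0
  have hr0 : r ≠ 0 := by
    rintro rfl
    rw [map_zero] at hrs
    exact mul_ne_zero hc0 hφs hrs
  have hKeq : φ (a * r ^ p) = φ (π * s ^ p) := by
    rw [map_mul, map_mul, map_pow, map_pow, ← hrs, mul_pow, ← hcoeff]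
    ring
  have hReq : a * r ^ p = π * s ^ p := IsFractionRing.injective R K hKeq
  -- valuation argument
  have hv := congrArg (IsDiscreteValuationRing.addVal R) hReq
  rw [IsDiscreteValuationRing.addVal_mul, IsDiscreteValuationRing.addVal_mul,
    IsDiscreteValuationRing.addVal_pow, IsDiscreteValuationRing.addVal_pow,
    IsDiscreteValuationRing.addVal_uniformizer hπ] at hv
  have hva : IsDiscreteValuationRing.addVal R a = 0 := by
    simpa using IsDiscreteValuationRing.addVal_def a ha.unit hπ 0 (by simp [ha.unit_spec])
  rw [hva, zero_add] at hv
  have hrtop : IsDiscreteValuationRing.addVal R r ≠ ⊤ :=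
    fun h => hr0 (IsDiscreteValuationRing.addVal_eq_top_iff.mp h)
  have hstop : IsDiscreteValuationRing.addVal R (s : R) ≠ ⊤ :=
    fun h => hs0 (IsDiscreteValuationRing.addVal_eq_top_iff.mp h)
  obtain ⟨nr, hnr⟩ := WithTop.ne_top_iff_exists.mp hrtop
  obtain ⟨ns, hns⟩ := WithTop.ne_top_iff_exists.mp hstop
  rw [← hnr, ← hns] at hv
  have hNat : ((p * nr : ℕ) : ℕ∞) = ((1 + p * ns : ℕ) : ℕ∞) := by
    push_cast
    convert hv using 2 <;> first | rfl | simp [nsmul_eq_mul]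
  have hNat' : p * nr = 1 + p * ns := by exact_mod_cast hNat
  have hdvd1 : p ∣ 1 := by
    have h1 : p * nr - p * ns = 1 := by omega
    exact h1 ▸ Nat.dvd_sub (dvd_mul_right p nr) (dvd_mul_right p ns)
  exact absurd (Nat.le_of_dvd one_pos hdvd1) (by omega)
end

section
/- Let p be a prime and n ≥ 1 an integer. Let R be a discrete valuation ring and let λ ∈ R be a nonzero element such that λ^{p^{n-1}(p-1)} divides p in R. Then for every integer k with 1 ≤ k ≤ pⁿ − 1, the element λ^{pⁿ} divides binom(pⁿ, k)·λ^k in R; equivalently, all coefficients of the polynomial ((1 + λT)^{pⁿ} − 1)/λ^{pⁿ} lie in R. -/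
/-- Arithmetic key inequality: `p^(m+e+1) ≤ p^m + (e+1) * ((p-1) * p^(m+e))`. -/
lemma stmt16_aux (p : ℕ) (hp : 1 ≤ p) (m : ℕ) :
    ∀ e : ℕ, p ^ (m + e + 1) ≤ p ^ m + (e + 1) * ((p - 1) * p ^ (m + e)) := by
  obtain ⟨q, rfl⟩ : ∃ q, p = q + 1 := ⟨p - 1, by omega⟩
  simp only [Nat.add_sub_cancel]
  intro e
  induction e with
  | zero => exact le_of_eq (by ring)
  | succ e ih =>
      calc (q + 1) ^ (m + (e + 1) + 1) = (q + 1) ^ (m + e + 1) * (q + 1) := by ring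
        _ ≤ ((q + 1) ^ m + (e + 1) * (q * (q + 1) ^ (m + e))) * (q + 1) :=
            Nat.mul_le_mul_right _ ih
        _ = (q + 1) ^ m + (q * (q + 1) ^ m + (e + 1) * (q * (q + 1) ^ (m + e + 1))) := by ring
        _ ≤ (q + 1) ^ m + (q * (q + 1) ^ (m + e + 1)
              + (e + 1) * (q * (q + 1) ^ (m + e + 1))) := by
            have : q * (q + 1) ^ m ≤ q * (q + 1) ^ (m + e + 1) :=
              Nat.mul_le_mul_left _ (Nat.pow_le_pow_right (by omega) (by omega))
            omega
        _ = (q + 1) ^ m + (e + 1 + 1) * (q * (q + 1) ^ (m + (e + 1))) := by ring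

/-- Let `p` be a prime, `n ≥ 1`, `R` a discrete valuation ring and `lam ∈ R` a nonzero
element such that `lam^{p^{n-1}(p-1)}` divides `p` in `R`.  Then for every `1 ≤ k ≤ pⁿ − 1`,
the element `lam^{pⁿ}` divides `binom(pⁿ, k)·lam^k` in `R` (equivalently, all coefficients
of `((1 + lam·T)^{pⁿ} − 1)/lam^{pⁿ}` lie in `R`). -/
theorem stmt16 (p : ℕ) (hp : p.Prime) (n : ℕ) (hn : 1 ≤ n)
    (R : Type*) [CommRing R] [IsDomain R] [IsDiscreteValuationRing R]
    (lam : R) (hlam : lam ≠ 0)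
    (hdvd : lam ^ (p ^ (n - 1) * (p - 1)) ∣ (p : R)) :
    ∀ k : ℕ, 1 ≤ k → k ≤ p ^ n - 1 →
      lam ^ (p ^ n) ∣ ((p ^ n).choose k : R) * lam ^ k := by
  intro k hk1 hk2
  have hppos : 0 < p := hp.pos
  have hk0 : k ≠ 0 := by omega
  have hpn1 : 1 ≤ p ^ n := Nat.one_le_pow _ _ hppos
  have hkpn : k ≤ p ^ n := by omega
  set m := k.factorization p with hm
  have hpmk : p ^ m ∣ k := Nat.ordProj_dvd k p
  have hpm_le : p ^ m ≤ k := Nat.le_of_dvd (by omega) hpmk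
  -- m < n
  have hmn : m < n := by
    by_contra h
    push_neg at h
    have : p ^ n ≤ p ^ m := Nat.pow_le_pow_right hppos h
    omega
  -- p ^ (n - m) divides the binomial coefficient
  have hchoose0 : (p ^ n).choose k ≠ 0 := (Nat.choose_pos hkpn).ne'
  have hfactc : ((p ^ n).choose k).factorization p = n - m := by
    have h := Nat.Prime.emultiplicity_choose_prime_pow hp hkpn hk0
    have hfin : FiniteMultiplicity p ((p ^ n).choose k) :=
      Nat.finiteMultiplicity_iff.2 ⟨hp.ne_one, Nat.pos_of_ne_zero hchoose0⟩
    rw [hfin.emultiplicity_eq_multiplicity] at h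
    have h' : multiplicity p ((p ^ n).choose k) = n - multiplicity p k := by
      exact_mod_cast h
    rw [Nat.multiplicity_eq_factorization hp hchoose0] at h'
    rw [Nat.multiplicity_eq_factorization hp hk0] at h'
    omega
  have hdvdc : p ^ (n - m) ∣ (p ^ n).choose k := by
    rw [Nat.Prime.pow_dvd_iff_le_factorization hp hchoose0, hfactc]
  -- transfer to R
  have hdvdcR : (p : R) ^ (n - m) ∣ ((p ^ n).choose k : R) := by
    obtain ⟨c, hc⟩ := hdvdc
    exact ⟨(c : R), by exact_mod_cast congrArg (Nat.cast : ℕ → R) hc⟩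
  have hlamp : lam ^ (p ^ (n - 1) * (p - 1) * (n - m)) ∣ (p : R) ^ (n - m) := by
    rw [pow_mul]
    exact pow_dvd_pow_of_dvd hdvd _
  have hbig : lam ^ (p ^ (n - 1) * (p - 1) * (n - m) + k) ∣ ((p ^ n).choose k : R) * lam ^ k := by
    rw [pow_add]
    exact mul_dvd_mul (dvd_trans hlamp hdvdcR) dvd_rfl
  refine dvd_trans (pow_dvd_pow lam ?_) hbig
  -- key inequality: p ^ n ≤ p^(n-1)*(p-1)*(n-m) + k
  obtain ⟨e, he⟩ : ∃ e, n = m + e + 1 := ⟨n - m - 1, by omega⟩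
  have key := stmt16_aux p hppos m e
  have h1 : n - 1 = m + e := by omega
  have h2 : n - m = e + 1 := by omega
  calc p ^ n = p ^ (m + e + 1) := by rw [he]
    _ ≤ p ^ m + (e + 1) * ((p - 1) * p ^ (m + e)) := key
    _ ≤ p ^ (n - 1) * (p - 1) * (n - m) + k := by
        rw [h1, h2]
        have heq : (e + 1) * ((p - 1) * p ^ (m + e)) = p ^ (m + e) * (p - 1) * (e + 1) := by
          ring
        omega
end
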